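/- (Monotonicity of volume comparison) Let n ≥ 1 and 0 < r₂ ≤ r₁, and let B_{r₁} = B(0, r₁) and B_{r₂} = B(0, r₂) be concentric open balls in ℝⁿ centered at the origin. Then for every measurable set A ⊆ ℝⁿ with vol_n(B_{r₁}) ≤ vol_n(A) < ∞, one has W₂(P_A, P_{B_{r₂}}) ≥ W₂(P_{B_{r₁}}, P_{B_{r₂}}). -/

import Mathlib

open MeasureTheory Metric Set
open scoped ENNReal NNReal

noncomputable section

/-- The uniform probability measure on a set `S ⊆ ℝⁿ`: Lebesgue measure restricted to `S`
and normalized. -/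
def unif {n : ℕ} (S : Set (EuclideanSpace ℝ (Fin n))) : Measure (EuclideanSpace ℝ (Fin n)) :=
  (volume S)⁻¹ • volume.restrict S

/-- The set of couplings of two measures `μ, ν` on `ℝⁿ`: measures on the product whose
marginals are `μ` and `ν`. -/
def couplings {n : ℕ} (μ ν : Measure (EuclideanSpace ℝ (Fin n))) :
    Set (Measure (EuclideanSpace ℝ (Fin n) × EuclideanSpace ℝ (Fin n))) :=
  {γ | γ.map Prod.fst = μ ∧ γ.map Prod.snd = ν}

/-- The `L²`-Wasserstein distance between two measures on `ℝⁿ` (valued in `ℝ≥0∞`):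
the infimum over all couplings `γ` of `(∫ ‖a − b‖² dγ(a, b))^{1/2}`. -/
def W2 {n : ℕ} (μ ν : Measure (EuclideanSpace ℝ (Fin n))) : ℝ≥0∞ :=
  ⨅ γ ∈ couplings μ ν, (∫⁻ w, edist w.1 w.2 ^ 2 ∂γ) ^ (1 / 2 : ℝ)


namespace VolComp
variable {α : Type*} [MeasurableSpace α]

/-- Double layer-cake formula. -/
lemma double_layercake (π : Measure α) {f g : α → ℝ}
    (hf : Measurable f) (hg : Measurable g)
    (hf0 : ∀ a, 0 ≤ f a) (hg0 : ∀ a, 0 ≤ g a) :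
    ∫⁻ a, ENNReal.ofReal (f a) * ENNReal.ofReal (g a) ∂π
      = ∫⁻ u in Ioi (0:ℝ), ∫⁻ v in Ioi (0:ℝ),
          π ({a | v < g a} ∩ {a | u < f a}) := by
  have hgm : Measurable fun a => ENNReal.ofReal (g a) := hg.ennreal_ofReal
  set ν := π.withDensity (fun a => ENNReal.ofReal (g a)) with hν
  have h1 : ∫⁻ a, ENNReal.ofReal (f a) * ENNReal.ofReal (g a) ∂π
      = ∫⁻ a, ENNReal.ofReal (f a) ∂ν := by
    rw [hν, lintegral_withDensity_eq_lintegral_mul π hgm hf.ennreal_ofReal]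
    exact lintegral_congr fun a => (mul_comm _ _)
  rw [h1, lintegral_eq_lintegral_meas_lt ν (ae_of_all _ hf0) hf.aemeasurable]
  refine setLIntegral_congr_fun measurableSet_Ioi (fun u hu => ?_)
  have hm : MeasurableSet {a | u < f a} := measurableSet_lt measurable_const hf
  calc ν {a | u < f a} = ∫⁻ a, ENNReal.ofReal (g a) ∂(π.restrict {a | u < f a}) := by
        rw [hν, withDensity_apply _ hm]
    _ = ∫⁻ v in Ioi (0:ℝ), (π.restrict {a | u < f a}) {a | v < g a} :=
        lintegral_eq_lintegral_meas_lt _ (ae_of_all _ hg0) hg.aemeasurable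
    _ = ∫⁻ v in Ioi (0:ℝ), π ({a | v < g a} ∩ {a | u < f a}) := by
        refine setLIntegral_congr_fun measurableSet_Ioi (fun v hv => ?_)
        rw [Measure.restrict_apply (measurableSet_lt measurable_const hg)]

lemma meas_inter_lt_eq_min (μ : Measure α) (f : α → ℝ) (u v : ℝ) :
    μ ({a | v < f a} ∩ {a | u < f a}) = min (μ {a | u < f a}) (μ {a | v < f a}) := by
  rcases le_total u v with h | h
  · have hsub : {a | v < f a} ⊆ {a | u < f a} := fun a ha => lt_of_le_of_lt h ha
    rw [inter_eq_left.2 hsub, min_eq_right (measure_mono hsub)]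
  · have hsub : {a | u < f a} ⊆ {a | v < f a} := fun a ha => lt_of_le_of_lt h ha
    rw [inter_eq_right.2 hsub, min_eq_left (measure_mono hsub)]

lemma sq_moment_eq (μ : Measure α) {f : α → ℝ} (hf : Measurable f) (hf0 : ∀ a, 0 ≤ f a) :
    ∫⁻ a, ENNReal.ofReal (f a) ^ 2 ∂μ
      = ∫⁻ u in Ioi (0:ℝ), ∫⁻ v in Ioi (0:ℝ),
          min (μ {a | u < f a}) (μ {a | v < f a}) := by
  have h : ∀ a, ENNReal.ofReal (f a) ^ 2
      = ENNReal.ofReal (f a) * ENNReal.ofReal (f a) := fun a => sq _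
  simp_rw [h]
  rw [double_layercake μ hf hf hf0 hf0]
  exact lintegral_congr fun u => lintegral_congr fun v => meas_inter_lt_eq_min μ f u v

lemma hoeffding {β β' : Type*} [MeasurableSpace β] [MeasurableSpace β']
    (γ : Measure (β × β')) (μ : Measure β) (ν : Measure β')
    {f : β → ℝ} {g : β' → ℝ} (hf : Measurable f) (hg : Measurable g)
    (hf0 : ∀ a, 0 ≤ f a) (hg0 : ∀ a, 0 ≤ g a)
    (h1 : γ.map Prod.fst = μ) (h2 : γ.map Prod.snd = ν) :
    ∫⁻ w, ENNReal.ofReal (f w.1) * ENNReal.ofReal (g w.2) ∂γ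
      ≤ ∫⁻ u in Ioi (0:ℝ), ∫⁻ v in Ioi (0:ℝ),
          min (μ {a | u < f a}) (ν {a | v < g a}) := by
  rw [double_layercake γ (f := fun w => f w.1) (g := fun w => g w.2)
      (hf.comp measurable_fst) (hg.comp measurable_snd) (fun w => hf0 _) (fun w => hg0 _)]
  refine lintegral_mono fun u => lintegral_mono fun v => le_min ?_ ?_
  · calc γ ({w : β × β' | v < g w.2} ∩ {w | u < f w.1})
        ≤ γ {w | u < f w.1} := measure_mono inter_subset_right
      _ = μ {a | u < f a} := by
          rw [← h1, Measure.map_apply measurable_fst (measurableSet_lt measurable_const hf)]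
          rfl
  · calc γ ({w : β × β' | v < g w.2} ∩ {w | u < f w.1})
        ≤ γ {w | v < g w.2} := measure_mono inter_subset_left
      _ = ν {a | v < g a} := by
          rw [← h2, Measure.map_apply measurable_snd (measurableSet_lt measurable_const hg)]
          rfl


lemma minsum_pointwise {F G : ℝ → ℝ≥0∞} (hF : Antitone F) (hG : Antitone G) (u v : ℝ) :
    min (F u) (G v) + min (F v) (G u) ≤ min (F u) (F v) + min (G u) (G v) := by
  rcases le_total u v with h | h
  · calc min (F u) (G v) + min (F v) (G u) ≤ G v + F v :=
        add_le_add (min_le_right _ _) (min_le_left _ _)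
      _ = min (F u) (F v) + min (G u) (G v) := by
        rw [min_eq_right (hF h), min_eq_right (hG h), add_comm]
  · calc min (F u) (G v) + min (F v) (G u) ≤ F u + G u :=
        add_le_add (min_le_left _ _) (min_le_right _ _)
      _ = min (F u) (F v) + min (G u) (G v) := by
        rw [min_eq_left (hF h), min_eq_left (hG h)]

lemma outer_antitone (F G : ℝ → ℝ≥0∞) (hF : Antitone F) :
    Antitone fun u => ∫⁻ v in Ioi (0:ℝ), min (F u) (G v) :=
  fun _ _ h => lintegral_mono fun _ => min_le_min (hF h) le_rfl

lemma two_mul_min_le {F G : ℝ → ℝ≥0∞} (hF : Antitone F) (hG : Antitone G) :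
    2 * ∫⁻ u in Ioi (0:ℝ), ∫⁻ v in Ioi (0:ℝ), min (F u) (G v)
      ≤ (∫⁻ u in Ioi (0:ℝ), ∫⁻ v in Ioi (0:ℝ), min (F u) (F v))
        + ∫⁻ u in Ioi (0:ℝ), ∫⁻ v in Ioi (0:ℝ), min (G u) (G v) := by
  have hFm : Measurable F := hF.measurable
  have hGm : Measurable G := hG.measurable
  have hswap : (∫⁻ u in Ioi (0:ℝ), ∫⁻ v in Ioi (0:ℝ), min (F u) (G v))
      = ∫⁻ u in Ioi (0:ℝ), ∫⁻ v in Ioi (0:ℝ), min (F v) (G u) :=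
    lintegral_lintegral_swap
      (((hFm.comp measurable_fst).min (hGm.comp measurable_snd)).aemeasurable)
  rw [two_mul]
  nth_rewrite 2 [hswap]
  have hadd : (∫⁻ u in Ioi (0:ℝ), ∫⁻ v in Ioi (0:ℝ), min (F u) (G v))
      + (∫⁻ u in Ioi (0:ℝ), ∫⁻ v in Ioi (0:ℝ), min (F v) (G u))
      = ∫⁻ u in Ioi (0:ℝ), ∫⁻ v in Ioi (0:ℝ), (min (F u) (G v) + min (F v) (G u)) := by
    rw [← lintegral_add_left ((outer_antitone F G hF).measurable)]
    exact lintegral_congr fun u =>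
      (lintegral_add_left (measurable_const.min hGm) _).symm
  rw [hadd]
  have hadd2 : (∫⁻ u in Ioi (0:ℝ), ∫⁻ v in Ioi (0:ℝ), min (F u) (F v))
      + (∫⁻ u in Ioi (0:ℝ), ∫⁻ v in Ioi (0:ℝ), min (G u) (G v))
      = ∫⁻ u in Ioi (0:ℝ), ∫⁻ v in Ioi (0:ℝ), (min (F u) (F v) + min (G u) (G v)) := by
    rw [← lintegral_add_left ((outer_antitone F F hF).measurable)]
    exact lintegral_congr fun u =>
      (lintegral_add_left (measurable_const.min hFm) _).symm
  rw [hadd2]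
  exact lintegral_mono fun u => lintegral_mono fun v => minsum_pointwise hF hG u v


lemma unif_apply {n : ℕ} (S T : Set (EuclideanSpace ℝ (Fin n))) (hT : MeasurableSet T) :
    unif S T = (volume S)⁻¹ * volume (T ∩ S) := by
  rw [unif, Measure.smul_apply, Measure.restrict_apply hT, smul_eq_mul]

lemma tail_dominance {n : ℕ} {r₁ : ℝ} (hr₁ : 0 < r₁)
    {A : Set (EuclideanSpace ℝ (Fin n))} (hA : MeasurableSet A)
    (hAvol : volume (ball (0 : EuclideanSpace ℝ (Fin n)) r₁) ≤ volume A)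
    (hAfin : volume A ≠ ⊤) (u : ℝ) :
    unif (ball (0 : EuclideanSpace ℝ (Fin n)) r₁) {x | u < ‖x‖}
      ≤ unif A {x | u < ‖x‖} := by
  set B₁ := ball (0 : EuclideanSpace ℝ (Fin n)) r₁ with hB₁
  have hv₁0 : volume B₁ ≠ 0 := (measure_ball_pos _ _ hr₁).ne'
  have hv₁t : volume B₁ ≠ ⊤ := measure_ball_lt_top.ne
  have hvA0 : volume A ≠ 0 := fun h => hv₁0 (le_antisymm (h ▸ hAvol) zero_le)
  have hSc : {x : EuclideanSpace ℝ (Fin n) | u < ‖x‖}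
      = (closedBall (0 : EuclideanSpace ℝ (Fin n)) u)ᶜ := by
    ext x; simp [mem_closedBall_zero_iff, not_le]
  have hSm : MeasurableSet {x : EuclideanSpace ℝ (Fin n) | u < ‖x‖} := by
    rw [hSc]; exact measurableSet_closedBall.compl
  set x := volume (closedBall (0 : EuclideanSpace ℝ (Fin n)) u) with hx
  have hxt : x ≠ ⊤ := measure_closedBall_lt_top.ne
  have hinterA : {x : EuclideanSpace ℝ (Fin n) | u < ‖x‖} ∩ A
      = A \ closedBall (0 : EuclideanSpace ℝ (Fin n)) u := by
    rw [hSc, diff_eq, inter_comm]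
  have hlow : volume A - x ≤ volume (A \ closedBall (0 : EuclideanSpace ℝ (Fin n)) u) := by
    rw [tsub_le_iff_right]
    calc volume A
        ≤ volume ((A \ closedBall (0 : EuclideanSpace ℝ (Fin n)) u)
            ∪ closedBall (0 : EuclideanSpace ℝ (Fin n)) u) :=
          measure_mono (subset_diff_union _ _)
      _ ≤ _ := measure_union_le _ _
  have hB₁exact : volume (B₁ \ closedBall (0 : EuclideanSpace ℝ (Fin n)) u)
      = volume B₁ - x := by
    rcases lt_or_ge u r₁ with h | h
    · rw [measure_diff (closedBall_subset_ball h)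
        measurableSet_closedBall.nullMeasurableSet hxt]
    · have hsub : B₁ ⊆ closedBall (0 : EuclideanSpace ℝ (Fin n)) u :=
        ball_subset_closedBall.trans (closedBall_subset_closedBall h)
      have hle : volume B₁ ≤ x := measure_mono hsub
      rw [diff_eq_empty.2 hsub, measure_empty]
      exact (tsub_eq_zero_iff_le.2 hle).symm
  have hinterB : {x : EuclideanSpace ℝ (Fin n) | u < ‖x‖} ∩ B₁
      = B₁ \ closedBall (0 : EuclideanSpace ℝ (Fin n)) u := by
    rw [hSc, diff_eq, inter_comm]
  rw [unif_apply _ _ hSm, unif_apply _ _ hSm, hinterA, hinterB, hB₁exact]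
  calc (volume B₁)⁻¹ * (volume B₁ - x) = 1 - (volume B₁)⁻¹ * x := by
        rw [ENNReal.mul_sub (fun _ _ => ENNReal.inv_ne_top.2 hv₁0),
          ENNReal.inv_mul_cancel hv₁0 hv₁t]
    _ ≤ 1 - (volume A)⁻¹ * x := by
        refine tsub_le_tsub_left (mul_le_mul_left ?_ x) 1
        exact ENNReal.inv_le_inv.2 hAvol
    _ = (volume A)⁻¹ * (volume A - x) := by
        rw [ENNReal.mul_sub (fun _ _ => ENNReal.inv_ne_top.2 hvA0),
          ENNReal.inv_mul_cancel hvA0 hAfin]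
    _ ≤ (volume A)⁻¹ * volume (A \ closedBall (0 : EuclideanSpace ℝ (Fin n)) u) :=
        mul_le_mul_right hlow _


lemma map_smul_unif_ball {n : ℕ} {c r : ℝ} (hc : 0 < c) (hr : 0 < r) :
    (unif (ball (0 : EuclideanSpace ℝ (Fin n)) r)).map (c • ·)
      = unif (ball (0 : EuclideanSpace ℝ (Fin n)) (c * r)) := by
  have hpre : ball (0 : EuclideanSpace ℝ (Fin n)) r
      = (c • ·) ⁻¹' (ball (0 : EuclideanSpace ℝ (Fin n)) (c * r)) := by
    ext x
    simp only [mem_preimage, mem_ball_zero_iff, norm_smul, Real.norm_eq_abs,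
      abs_of_pos hc]
    exact (mul_lt_mul_iff_right₀ hc).symm
  have hv : volume (ball (0 : EuclideanSpace ℝ (Fin n)) (c * r))
      = ENNReal.ofReal (c ^ n) * volume (ball (0 : EuclideanSpace ℝ (Fin n)) r) := by
    simpa [finrank_euclideanSpace_fin]
      using Measure.addHaar_ball_mul_of_pos (volume : Measure (EuclideanSpace ℝ (Fin n)))
        (0 : EuclideanSpace ℝ (Fin n)) hc r
  have hmapvol : Measure.map (c • ·) (volume : Measure (EuclideanSpace ℝ (Fin n)))
      = ENNReal.ofReal ((c ^ n))⁻¹ • volume := by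
    rw [Measure.map_addHaar_smul (volume : Measure (EuclideanSpace ℝ (Fin n))) hc.ne']
    congr 1
    rw [finrank_euclideanSpace_fin, abs_of_pos (by positivity)]
  have hmeas : Measurable fun x : EuclideanSpace ℝ (Fin n) => c • x := measurable_const_smul c
  rw [unif, unif, Measure.map_smul, hpre, ← Measure.restrict_map hmeas measurableSet_ball, hmapvol, Measure.restrict_smul, smul_smul, hv]
  congr 1
  rw [← hpre]
  have h0 : volume (ball (0 : EuclideanSpace ℝ (Fin n)) r) ≠ 0 := (measure_ball_pos _ _ hr).ne'
  have ht : volume (ball (0 : EuclideanSpace ℝ (Fin n)) r) ≠ ⊤ := measure_ball_lt_top.ne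
  rw [ENNReal.mul_inv (Or.inl (by positivity)) (Or.inl ENNReal.ofReal_ne_top),
    ENNReal.ofReal_inv_of_pos (by positivity), mul_comm]


lemma ofReal_sq_identity (a b : ℝ) (ha : 0 ≤ a) (hb : 0 ≤ b) :
    ENNReal.ofReal |a - b| ^ 2 + 2 * (ENNReal.ofReal a * ENNReal.ofReal b)
      = ENNReal.ofReal a ^ 2 + ENNReal.ofReal b ^ 2 := by
  have h2 : (2:ℝ≥0∞) = ENNReal.ofReal 2 := by norm_num
  have e1 : (0:ℝ) ≤ |a - b| ^ 2 := pow_nonneg (abs_nonneg _) 2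
  have e2 : (0:ℝ) ≤ 2 * (a * b) := by positivity
  have e3 : (0:ℝ) ≤ a ^ 2 := by positivity
  have e4 : (0:ℝ) ≤ b ^ 2 := by positivity
  rw [← ENNReal.ofReal_pow (abs_nonneg _), ← ENNReal.ofReal_pow ha,
    ← ENNReal.ofReal_pow hb, ← ENNReal.ofReal_mul ha, h2,
    ← ENNReal.ofReal_mul (by norm_num : (0:ℝ) ≤ 2)]
  rw [← ENNReal.ofReal_add e1 e2, ← ENNReal.ofReal_add e3 e4]
  congr 1
  rw [sq_abs]; ring

lemma ofReal_sq_le (a b : ℝ) (ha : 0 ≤ a) (hb : 0 ≤ b) :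
    ENNReal.ofReal a ^ 2 ≤ 2 * ENNReal.ofReal |a - b| ^ 2 + 2 * ENNReal.ofReal b ^ 2 := by
  have h2 : (2:ℝ≥0∞) = ENNReal.ofReal 2 := by norm_num
  have e1 : (0:ℝ) ≤ 2 * |a - b| ^ 2 := by positivity
  have e2 : (0:ℝ) ≤ 2 * b ^ 2 := by positivity
  rw [← ENNReal.ofReal_pow (abs_nonneg _), ← ENNReal.ofReal_pow ha,
    ← ENNReal.ofReal_pow hb, h2, ← ENNReal.ofReal_mul (by norm_num : (0:ℝ) ≤ 2),
    ← ENNReal.ofReal_mul (by norm_num : (0:ℝ) ≤ 2), ← ENNReal.ofReal_add e1 e2]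
  refine ENNReal.ofReal_le_ofReal ?_
  rw [sq_abs]
  nlinarith [sq_nonneg (a - 2 * b)]

lemma coeff_identity {c : ℝ} (h0 : 0 ≤ c) (h1 : c ≤ 1) :
    ENNReal.ofReal (1 - c) ^ 2 + ENNReal.ofReal c
      = ENNReal.ofReal (1 - c) + ENNReal.ofReal c ^ 2 := by
  have e1 : (0:ℝ) ≤ (1 - c) ^ 2 := sq_nonneg _
  have e2 : (0:ℝ) ≤ c ^ 2 := sq_nonneg _
  have e3 : (0:ℝ) ≤ 1 - c := by linarith
  rw [← ENNReal.ofReal_pow e3, ← ENNReal.ofReal_pow h0,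
    ← ENNReal.ofReal_add e1 h0, ← ENNReal.ofReal_add e3 e2]
  congr 1
  ring

lemma ofReal_add_compl {c : ℝ} (h0 : 0 ≤ c) (h1 : c ≤ 1) :
    ENNReal.ofReal c + ENNReal.ofReal (1 - c) = 1 := by
  rw [← ENNReal.ofReal_add h0 (by linarith)]
  have h : c + (1 - c) = 1 := by ring
  rw [h, ENNReal.ofReal_one]

end VolComp

open VolComp

/-- **Monotonicity of volume comparison.** Let `0 < r₂ ≤ r₁` and let
`B_{r₁}, B_{r₂} ⊆ ℝⁿ` be concentric open balls centered at the origin. Then for every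
measurable `A ⊆ ℝⁿ` with `vol(B_{r₁}) ≤ vol(A) < ∞`, one has
`W₂(P_A, P_{B_{r₂}}) ≥ W₂(P_{B_{r₁}}, P_{B_{r₂}})`. -/
theorem monotonicity_of_volume_comparison (n : ℕ) (hn : 1 ≤ n) (r₁ r₂ : ℝ)
    (hr₂ : 0 < r₂) (hr₂₁ : r₂ ≤ r₁)
    (A : Set (EuclideanSpace ℝ (Fin n))) (hA : MeasurableSet A)
    (hAvol : volume (ball (0 : EuclideanSpace ℝ (Fin n)) r₁) ≤ volume A)
    (hAfin : volume A ≠ ⊤) :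
    W2 (unif A) (unif (ball (0 : EuclideanSpace ℝ (Fin n)) r₂)) ≥
      W2 (unif (ball (0 : EuclideanSpace ℝ (Fin n)) r₁))
        (unif (ball (0 : EuclideanSpace ℝ (Fin n)) r₂)) := by
  have hr₁ : 0 < r₁ := lt_of_lt_of_le hr₂ hr₂₁
  set c := r₂ / r₁ with hc
  have hc0 : 0 < c := div_pos hr₂ hr₁
  have hc1 : c ≤ 1 := (div_le_one hr₁).2 hr₂₁
  have hcr : c * r₁ = r₂ := div_mul_cancel₀ r₂ hr₁.ne'
  set B₁ := ball (0 : EuclideanSpace ℝ (Fin n)) r₁ with hB₁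
  set B₂ := ball (0 : EuclideanSpace ℝ (Fin n)) r₂ with hB₂
  have hv₁0 : volume B₁ ≠ 0 := (measure_ball_pos _ _ hr₁).ne'
  have hv₁t : volume B₁ ≠ ⊤ := measure_ball_lt_top.ne
  -- measurability helpers
  have mn : Measurable fun x : EuclideanSpace ℝ (Fin n) => ENNReal.ofReal ‖x‖ ^ 2 :=
    measurable_norm.ennreal_ofReal.pow_const 2
  have m1 : Measurable fun w : EuclideanSpace ℝ (Fin n) × EuclideanSpace ℝ (Fin n) =>
      ENNReal.ofReal ‖w.1‖ := measurable_fst.norm.ennreal_ofReal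
  have m2 : Measurable fun w : EuclideanSpace ℝ (Fin n) × EuclideanSpace ℝ (Fin n) =>
      ENNReal.ofReal ‖w.2‖ := measurable_snd.norm.ennreal_ofReal
  have mabs : Measurable fun w : EuclideanSpace ℝ (Fin n) × EuclideanSpace ℝ (Fin n) =>
      ENNReal.ofReal |‖w.1‖ - ‖w.2‖| ^ 2 :=
    ((measurable_fst.norm.sub measurable_snd.norm).abs.ennreal_ofReal).pow_const 2
  set m := ∫⁻ x, ENNReal.ofReal ‖x‖ ^ 2 ∂(unif B₁) with hmdef
  have hmap : (unif B₁).map (c • ·) = unif B₂ := by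
    rw [hB₁, hB₂, map_smul_unif_ball hc0 hr₁, hcr]
  have hm_fin : m ≠ ⊤ := by
    have hb : m ≤ (volume B₁)⁻¹ * (ENNReal.ofReal (r₁ ^ 2) * volume B₁) := by
      rw [hmdef, unif, lintegral_smul_measure]
      refine mul_le_mul_right ?_ _
      calc ∫⁻ x in B₁, ENNReal.ofReal ‖x‖ ^ 2 ∂volume
          ≤ ∫⁻ _ in B₁, ENNReal.ofReal (r₁ ^ 2) ∂volume := by
            refine setLIntegral_mono' measurableSet_ball fun x hx => ?_
            rw [← ENNReal.ofReal_pow (norm_nonneg _)]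
            refine ENNReal.ofReal_le_ofReal ?_
            have hx' : ‖x‖ < r₁ := mem_ball_zero_iff.1 hx
            nlinarith [norm_nonneg x]
        _ = ENNReal.ofReal (r₁ ^ 2) * volume B₁ := setLIntegral_const _ _
    exact ne_top_of_le_ne_top
      (ENNReal.mul_ne_top (ENNReal.inv_ne_top.2 hv₁0)
        (ENNReal.mul_ne_top ENNReal.ofReal_ne_top hv₁t)) hb
  -- the explicit coupling between the two balls
  have hk : Measurable fun x : EuclideanSpace ℝ (Fin n) => (x, c • x) :=
    measurable_id.prodMk (measurable_const_smul c)
  set γ' := (unif B₁).map (fun x => (x, c • x)) with hγ'def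
  have hγ'mem : γ' ∈ couplings (unif B₁) (unif B₂) := by
    constructor
    · rw [hγ'def, Measure.map_map measurable_fst hk]
      exact Measure.map_id
    · rw [hγ'def, Measure.map_map measurable_snd hk]
      exact hmap
  have hcost' : (∫⁻ w, edist w.1 w.2 ^ 2 ∂γ') = ENNReal.ofReal (1 - c) ^ 2 * m := by
    rw [hγ'def, lintegral_map ((measurable_fst.edist measurable_snd).pow_const 2) hk]
    have hpt : ∀ x : EuclideanSpace ℝ (Fin n),
        edist x (c • x) ^ 2 = ENNReal.ofReal (1 - c) ^ 2 * ENNReal.ofReal ‖x‖ ^ 2 := by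
      intro x
      have h1 : x - c • x = (1 - c) • x := by rw [sub_smul, one_smul]
      rw [edist_dist, dist_eq_norm, h1, norm_smul, Real.norm_eq_abs,
        abs_of_nonneg (by linarith), ENNReal.ofReal_mul (by linarith), mul_pow]
    simp_rw [hpt]
    rw [lintegral_const_mul _ mn]
  rw [ge_iff_le]
  unfold W2
  refine le_iInf₂ fun γ hγ => ?_
  obtain ⟨hγ1, hγ2⟩ := hγ
  refine le_trans (iInf₂_le γ' hγ'mem) (ENNReal.rpow_le_rpow ?_ (by norm_num))
  rw [hcost']
  -- main estimate : ofReal (1-c)^2 * m ≤ cost γ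
  have hCle : (∫⁻ w, ENNReal.ofReal |‖w.1‖ - ‖w.2‖| ^ 2 ∂γ)
      ≤ ∫⁻ w, edist w.1 w.2 ^ 2 ∂γ := by
    refine lintegral_mono fun w => ?_
    have h : ENNReal.ofReal |‖w.1‖ - ‖w.2‖| ≤ edist w.1 w.2 := by
      rw [edist_dist]
      exact ENNReal.ofReal_le_ofReal
        ((abs_norm_sub_norm_le _ _).trans_eq (dist_eq_norm _ _).symm)
    gcongr
  by_cases hC : (∫⁻ w, ENNReal.ofReal |‖w.1‖ - ‖w.2‖| ^ 2 ∂γ) = ⊤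
  · exact le_trans le_top (hC ▸ hCle)
  refine le_trans ?_ hCle
  -- quantities
  set Er2 := ∫⁻ x, ENNReal.ofReal ‖x‖ ^ 2 ∂(unif A) with hEr2def
  set Es2 := ∫⁻ x, ENNReal.ofReal ‖x‖ ^ 2 ∂(unif B₂) with hEs2def
  set Ers := ∫⁻ w, ENNReal.ofReal ‖w.1‖ * ENNReal.ofReal ‖w.2‖ ∂γ with hErsdef
  have hEr2γ : (∫⁻ w, ENNReal.ofReal ‖w.1‖ ^ 2 ∂γ) = Er2 := by
    rw [hEr2def, ← hγ1, lintegral_map mn measurable_fst]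
  have hEs2γ : (∫⁻ w, ENNReal.ofReal ‖w.2‖ ^ 2 ∂γ) = Es2 := by
    rw [hEs2def, ← hγ2, lintegral_map mn measurable_snd]
  -- pointwise algebraic identity
  have hpt2 : ∀ w : EuclideanSpace ℝ (Fin n) × EuclideanSpace ℝ (Fin n),
      ENNReal.ofReal |‖w.1‖ - ‖w.2‖| ^ 2
          + 2 * (ENNReal.ofReal ‖w.1‖ * ENNReal.ofReal ‖w.2‖)
        = ENNReal.ofReal ‖w.1‖ ^ 2 + ENNReal.ofReal ‖w.2‖ ^ 2 :=
    fun w => ofReal_sq_identity ‖w.1‖ ‖w.2‖ (norm_nonneg _) (norm_nonneg _)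
  have hI : (∫⁻ w, ENNReal.ofReal |‖w.1‖ - ‖w.2‖| ^ 2 ∂γ) + 2 * Ers = Er2 + Es2 := by
    rw [hErsdef, ← lintegral_const_mul 2 (show Measurable fun w : EuclideanSpace ℝ (Fin n) × EuclideanSpace ℝ (Fin n) => ENNReal.ofReal ‖w.1‖ * ENNReal.ofReal ‖w.2‖ from m1.mul m2), ← lintegral_add_left mabs,
      lintegral_congr hpt2, lintegral_add_left (m1.pow_const 2), hEr2γ, hEs2γ]
  -- tails
  set TA := fun u : ℝ => unif A {x | u < ‖x‖} with hTAdef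
  set T1 := fun u : ℝ => unif B₁ {x | u < ‖x‖} with hT1def
  have hTAanti : Antitone TA := fun u u' h => measure_mono fun x hx => lt_of_le_of_lt h hx
  have hT1anti : Antitone T1 := fun u u' h => measure_mono fun x hx => lt_of_le_of_lt h hx
  have hEr2min : Er2 = ∫⁻ u in Ioi (0:ℝ), ∫⁻ v in Ioi (0:ℝ), min (TA u) (TA v) :=
    sq_moment_eq (unif A) measurable_norm fun x => norm_nonneg x
  have hmmin : m = ∫⁻ u in Ioi (0:ℝ), ∫⁻ v in Ioi (0:ℝ), min (T1 u) (T1 v) :=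
    sq_moment_eq (unif B₁) measurable_norm fun x => norm_nonneg x
  set M := ∫⁻ u in Ioi (0:ℝ), ∫⁻ v in Ioi (0:ℝ), min (TA u) (T1 v) with hMdef
  -- the rescaled coupling γ'' between unif A and unif B₁
  have hk2 : Measurable fun w : EuclideanSpace ℝ (Fin n) × EuclideanSpace ℝ (Fin n) =>
      (w.1, c⁻¹ • w.2) := measurable_fst.prodMk (measurable_snd.const_smul c⁻¹)
  set γ'' := γ.map (fun w : EuclideanSpace ℝ (Fin n) × EuclideanSpace ℝ (Fin n) =>
    (w.1, c⁻¹ • w.2)) with hγ''def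
  have hγ''1 : γ''.map Prod.fst = unif A := by
    rw [hγ''def, Measure.map_map measurable_fst hk2]
    exact hγ1
  have hγ''2 : γ''.map Prod.snd = unif B₁ := by
    rw [hγ''def, Measure.map_map measurable_snd hk2]
    have hcomp : (Prod.snd ∘ fun w : EuclideanSpace ℝ (Fin n) × EuclideanSpace ℝ (Fin n) =>
        (w.1, c⁻¹ • w.2)) = (fun x : EuclideanSpace ℝ (Fin n) => c⁻¹ • x) ∘ Prod.snd := rfl
    rw [hcomp, ← Measure.map_map (measurable_const_smul c⁻¹) measurable_snd, hγ2, hB₂,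
      map_smul_unif_ball (inv_pos.2 hc0) hr₂]
    have : c⁻¹ * r₂ = r₁ := by
      rw [hc]; field_simp
    rw [this]
  have hfac : Ers = ENNReal.ofReal c
      * ∫⁻ w, ENNReal.ofReal ‖w.1‖ * ENNReal.ofReal ‖w.2‖ ∂γ'' := by
    have mB : Measurable fun w : EuclideanSpace ℝ (Fin n) × EuclideanSpace ℝ (Fin n) =>
        ENNReal.ofReal ‖w.1‖ * ENNReal.ofReal ‖c⁻¹ • w.2‖ :=
      m1.mul (((measurable_const_smul c⁻¹).comp measurable_snd).norm.ennreal_ofReal)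
    rw [hγ''def, lintegral_map (show Measurable fun w : EuclideanSpace ℝ (Fin n) × EuclideanSpace ℝ (Fin n) => ENNReal.ofReal ‖w.1‖ * ENNReal.ofReal ‖w.2‖ from m1.mul m2) hk2]
    show Ers = ENNReal.ofReal c
      * ∫⁻ w, ENNReal.ofReal ‖w.1‖ * ENNReal.ofReal ‖c⁻¹ • w.2‖ ∂γ
    rw [← lintegral_const_mul _ mB]
    refine lintegral_congr fun w => ?_
    have h2 : ENNReal.ofReal ‖w.2‖ = ENNReal.ofReal c * ENNReal.ofReal ‖c⁻¹ • w.2‖ := by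
      rw [norm_smul, Real.norm_eq_abs, abs_of_pos (inv_pos.2 hc0),
        ← ENNReal.ofReal_mul hc0.le, ← mul_assoc, mul_inv_cancel₀ hc0.ne', one_mul]
    rw [h2]; ring
  have hErsM : (∫⁻ w, ENNReal.ofReal ‖w.1‖ * ENNReal.ofReal ‖w.2‖ ∂γ'') ≤ M :=
    hoeffding γ'' (unif A) (unif B₁) measurable_norm measurable_norm
      (fun x => norm_nonneg x) (fun x => norm_nonneg x) hγ''1 hγ''2
  have hEs2 : Es2 = ENNReal.ofReal c ^ 2 * m := by
    rw [hEs2def, ← hmap, lintegral_map mn (measurable_const_smul c)]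
    have hpt3 : ∀ x : EuclideanSpace ℝ (Fin n),
        ENNReal.ofReal ‖c • x‖ ^ 2 = ENNReal.ofReal c ^ 2 * ENNReal.ofReal ‖x‖ ^ 2 := by
      intro x
      rw [norm_smul, Real.norm_eq_abs, abs_of_pos hc0, ENNReal.ofReal_mul hc0.le, mul_pow]
    simp_rw [hpt3]
    rw [lintegral_const_mul _ mn, hmdef]
  -- comparison facts
  have hdom : ∀ u : ℝ, T1 u ≤ TA u := fun u => tail_dominance hr₁ hA hAvol hAfin u
  have hmM : m ≤ M := by
    rw [hmmin, hMdef]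
    refine setLIntegral_mono' measurableSet_Ioi fun u _ => ?_
    exact lintegral_mono fun v => min_le_min (hdom u) le_rfl
  have hsym : 2 * M ≤ Er2 + m := by
    rw [hMdef, hEr2min, hmmin]
    exact two_mul_min_le hTAanti hT1anti
  -- finiteness
  have hEs2_fin : Es2 ≠ ⊤ := by
    rw [hEs2]
    exact ENNReal.mul_ne_top (ENNReal.pow_ne_top ENNReal.ofReal_ne_top) hm_fin
  have hEr2_fin : Er2 ≠ ⊤ := by
    have hb : Er2 ≤ 2 * (∫⁻ w, ENNReal.ofReal |‖w.1‖ - ‖w.2‖| ^ 2 ∂γ) + 2 * Es2 := by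
      rw [← hEr2γ, ← hEs2γ, ← lintegral_const_mul 2 mabs,
        ← lintegral_const_mul 2 (m2.pow_const 2),
        ← lintegral_add_left (mabs.const_mul 2)]
      exact lintegral_mono fun w =>
        ofReal_sq_le ‖w.1‖ ‖w.2‖ (norm_nonneg _) (norm_nonneg _)
    exact ne_top_of_le_ne_top
      (ENNReal.add_ne_top.2 ⟨ENNReal.mul_ne_top (by norm_num) hC,
        ENNReal.mul_ne_top (by norm_num) hEs2_fin⟩) hb
  have hM_fin : M ≠ ⊤ := by
    refine ne_top_of_le_ne_top (ENNReal.add_ne_top.2 ⟨hEr2_fin, hm_fin⟩) ?_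
    calc M ≤ M + M := le_self_add
      _ = 2 * M := (two_mul M).symm
      _ ≤ Er2 + m := hsym
  have hErs_le : Ers ≤ ENNReal.ofReal c * M := by
    rw [hfac]; exact mul_le_mul_right hErsM _
  have hErs_fin : Ers ≠ ⊤ :=
    ne_top_of_le_ne_top (ENNReal.mul_ne_top ENNReal.ofReal_ne_top hM_fin) hErs_le
  have hm_le_Er2 : m ≤ Er2 := by
    have h : m + m ≤ Er2 + m := by
      rw [← two_mul]
      exact le_trans (mul_le_mul_right hmM 2) hsym
    exact (ENNReal.add_le_add_iff_right hm_fin).1 h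
  -- the key inequality
  have hkey : ENNReal.ofReal (1 - c) ^ 2 * m + 2 * Ers ≤ Er2 + Es2 := by
    have hsplit : ENNReal.ofReal c + ENNReal.ofReal (1 - c) = 1 :=
      ofReal_add_compl hc0.le hc1
    have h2Ers : 2 * Ers ≤ ENNReal.ofReal c * Er2 + ENNReal.ofReal c * m := by
      calc 2 * Ers ≤ 2 * (ENNReal.ofReal c * M) := mul_le_mul_right hErs_le 2
        _ = ENNReal.ofReal c * (2 * M) := by ring
        _ ≤ ENNReal.ofReal c * (Er2 + m) := mul_le_mul_right hsym _
        _ = _ := mul_add _ _ _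
    calc ENNReal.ofReal (1 - c) ^ 2 * m + 2 * Ers
        ≤ ENNReal.ofReal (1 - c) ^ 2 * m
            + (ENNReal.ofReal c * Er2 + ENNReal.ofReal c * m) := add_le_add_right h2Ers _
      _ = (ENNReal.ofReal (1 - c) ^ 2 + ENNReal.ofReal c) * m + ENNReal.ofReal c * Er2 := by
          ring
      _ = (ENNReal.ofReal (1 - c) + ENNReal.ofReal c ^ 2) * m + ENNReal.ofReal c * Er2 := by
          rw [coeff_identity hc0.le hc1]
      _ = ENNReal.ofReal (1 - c) * m + ENNReal.ofReal c ^ 2 * m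
            + ENNReal.ofReal c * Er2 := by ring
      _ ≤ ENNReal.ofReal (1 - c) * Er2 + ENNReal.ofReal c ^ 2 * m
            + ENNReal.ofReal c * Er2 := by
          exact add_le_add_left (add_le_add_left (mul_le_mul_right hm_le_Er2 _) _) _
      _ = (ENNReal.ofReal c + ENNReal.ofReal (1 - c)) * Er2 + ENNReal.ofReal c ^ 2 * m := by
          ring
      _ = Er2 + Es2 := by rw [hsplit, one_mul, hEs2]
  have h2Ers_fin : 2 * Ers ≠ ⊤ := ENNReal.mul_ne_top (by norm_num) hErs_fin
  refine (ENNReal.add_le_add_iff_right h2Ers_fin).1 ?_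
  rw [hI]
  exact hkey


end
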